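/- Under Assumptions 1 and 2 (u symmetric, nondecreasing, submodular, u(∅)=0, u(0,x)=u(x), and history-independence of the benefit of a prize with respect to larger prizes), the functions f_ℓ(x) = g_ℓ(x) - g_{ℓ-1}(x), where g_ℓ(x) = u(x repeated ℓ times), satisfy: f_ℓ(x) is nondecreasing in x for each ℓ. -/

import Mathlib

open scoped NNReal

/-- `u` is symmetric: invariant under permutations of its arguments. -/
def IsSymmU (u : List ℝ≥0 → ℝ) : Prop := ∀ l l' : List ℝ≥0, l.Perm l' → u l = u l'

/-- `u` is nondecreasing in each argument. -/
def IsMonoU (u : List ℝ≥0 → ℝ) : Prop :=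
  ∀ l l' : List ℝ≥0, List.Forall₂ (· ≤ ·) l l' → u l ≤ u l'

/-- `u` is submodular: `u(x∧y)+u(x∨y) ≤ u(x)+u(y)` for equal-length tuples. -/
def IsSubmodU (u : List ℝ≥0 → ℝ) : Prop := ∀ l l' : List ℝ≥0, l.length = l'.length →
  u (List.zipWith min l l') + u (List.zipWith max l l') ≤ u l + u l'

/-- `u` is continuous on tuples of each fixed length. -/
def IsContU (u : List ℝ≥0 → ℝ) : Prop :=
  ∀ n : ℕ, Continuous (fun v : Fin n → ℝ≥0 => u (List.ofFn v))

/-- Assumption 1: `u(∅)=0`, prepending a zero leaves `u` unchanged, `u` nonnegative,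
continuous, symmetric, nondecreasing and submodular. -/
def Assumption1 (u : List ℝ≥0 → ℝ) : Prop :=
  u [] = 0 ∧ (∀ l, u (0 :: l) = u l) ∧ (∀ l, 0 ≤ u l) ∧
    IsContU u ∧ IsSymmU u ∧ IsMonoU u ∧ IsSubmodU u

/-- Assumption 2: the benefit of raising an argument from `0` to `xi` does not
depend on the values of other arguments exceeding `xi`. -/
def Assumption2 (u : List ℝ≥0 → ℝ) : Prop :=
  ∀ (l : List ℝ≥0) (xi xlo xhi : ℝ≥0), xi ≤ xlo → xlo < xhi →
    u (l ++ [xhi, xi]) - u (l ++ [xhi, 0]) = u (l ++ [xlo, xi]) - u (l ++ [xlo, 0])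

lemma u_drop_zero (u : List ℝ≥0 → ℝ) (hA1 : Assumption1 u) (l : List ℝ≥0) :
    u (l ++ [0]) = u l := by
  rw [hA1.2.2.2.2.1 (l ++ [0]) (0 :: l) (List.perm_append_singleton 0 l), hA1.2.1]

lemma key_lemma (u : List ℝ≥0 → ℝ) (hA1 : Assumption1 u) (hA2 : Assumption2 u)
    {x y : ℝ≥0} (hxy : x < y) :
    ∀ k m : ℕ,
      u (List.replicate k y ++ List.replicate m x ++ [x])
          - u (List.replicate k y ++ List.replicate m x)
        = u (List.replicate (m + k) x ++ [x]) - u (List.replicate (m + k) x) := by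
  intro k
  induction k with
  | zero => intro m; simp
  | succ k ih =>
    intro m
    set A := List.replicate k y ++ List.replicate m x with hA
    have h2 := hA2 A x x y le_rfl hxy
    have hsymm := hA1.2.2.2.2.1
    -- A ++ [x] = rep k y ++ rep (m+1) x
    have hAx : A ++ [x] = List.replicate k y ++ List.replicate (m + 1) x := by
      rw [hA, List.append_assoc, ← List.replicate_succ']
    -- permutation: A ++ [y, x] ~ rep (k+1) y ++ rep m x ++ [x]
    have hperm : (A ++ [y, x]).Perm (List.replicate (k + 1) y ++ List.replicate m x ++ [x]) := by
      have h1 : (A ++ [y]).Perm (y :: A) := List.perm_append_singleton y A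
      have h2 : (A ++ [y, x]) = (A ++ [y]) ++ [x] := by simp
      rw [h2]
      have : (y :: A) ++ [x] = List.replicate (k + 1) y ++ List.replicate m x ++ [x] := by
        rw [hA, List.replicate_succ]; simp
      rw [← this]
      exact h1.append_right [x]
    have hperm0 : (A ++ [y, 0]).Perm (0 :: (List.replicate (k + 1) y ++ List.replicate m x)) := by
      have : (A ++ [y, 0]) = (A ++ [y]) ++ [0] := by simp
      rw [this]
      refine ((List.perm_append_singleton 0 (A ++ [y])).trans ?_)
      refine List.Perm.cons 0 ?_
      have : List.replicate (k + 1) y ++ List.replicate m x = y :: A := by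
        rw [hA, List.replicate_succ]; simp
      rw [this]
      exact List.perm_append_singleton y A
    -- rewrite all four terms
    rw [hsymm _ _ hperm] at h2
    rw [hsymm _ _ hperm0, hA1.2.1] at h2
    have hxx : A ++ [x, x] = (List.replicate k y ++ List.replicate (m + 1) x) ++ [x] := by
      rw [← hAx]; simp
    have hx0 : A ++ [x, 0] = (A ++ [x]) ++ [0] := by simp
    rw [hxx, hx0, u_drop_zero u hA1, hAx] at h2
    rw [h2, ih (m + 1)]
    have heq : m + 1 + k = m + (k + 1) := by omega
    rw [heq]

/-- Lemma 2(b), monotonicity part: under Assumptions 1 and 2, each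
`f_ℓ(x) = u(x,…,x) (ℓ times) - u(x,…,x) (ℓ-1 times)` is nondecreasing in `x`. -/
theorem stmt_5 (u : List ℝ≥0 → ℝ) (hA1 : Assumption1 u) (hA2 : Assumption2 u) (ℓ : ℕ) :
    Monotone (fun x : ℝ≥0 =>
      u (List.replicate (ℓ + 1) x) - u (List.replicate ℓ x)) := by
  intro x y hxy
  rcases eq_or_lt_of_le hxy with rfl | hlt
  · exact le_rfl
  · have hsymm := hA1.2.2.2.2.1
    have hmono := hA1.2.2.2.2.2.1
    have hkey := key_lemma u hA1 hA2 hlt ℓ 0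
    simp only [List.replicate, List.nil_append, List.append_nil, Nat.zero_add] at hkey
    have hfx : u (List.replicate (ℓ + 1) x) - u (List.replicate ℓ x)
        = u (List.replicate ℓ y ++ [x]) - u (List.replicate ℓ y) := by
      rw [List.replicate_succ' (n := ℓ) (a := x)]
      exact hkey.symm
    have hle : u (List.replicate ℓ y ++ [x]) ≤ u (List.replicate ℓ y ++ [y]) := by
      apply hmono
      exact List.rel_append (List.forall₂_refl _) (List.Forall₂.cons hlt.le List.Forall₂.nil)
    show u (List.replicate (ℓ + 1) x) - u (List.replicate ℓ x)
        ≤ u (List.replicate (ℓ + 1) y) - u (List.replicate ℓ y)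
    rw [hfx, List.replicate_succ' (n := ℓ) (a := y)]
    linarith
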